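/- Let 1 ≤ k ≤ n−1 and let A be an n×n matrix of rational functions, each bounded at infinity, which is reduced of order k−1 and satisfies A_{k,k+1}(∞) ≠ 0. Then there exists an n×n matrix B of rational functions, each bounded at infinity, such that B is of the same kind as A and B is reduced of order k; moreover, there exists an invertible constant matrix S (namely S = T(∞) for the transforming matrix T) such that B(∞) = S^{−1} A(∞) S, so A(∞) and B(∞) are similar and hence have the same eigenvalues including algebraic and geometric multiplicities. -/

import Mathlib

open Filter

/-- Evaluation of a rational function at a point of `ℂ`. -/
noncomputable def evalRat (f : RatFunc ℂ) (z : ℂ) : ℂ := f.eval (RingHom.id ℂ) z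

/-- A rational function is bounded at infinity iff the degree of its numerator
does not exceed the degree of its denominator. -/
def BddAtInf (f : RatFunc ℂ) : Prop := f.num.degree ≤ f.denom.degree

/-- The derivative of a rational function, as a rational function. -/
noncomputable def ratDeriv (f : RatFunc ℂ) : RatFunc ℂ :=
  (algebraMap (Polynomial ℂ) (RatFunc ℂ) (Polynomial.derivative f.num) *
      algebraMap (Polynomial ℂ) (RatFunc ℂ) f.denom -
    algebraMap (Polynomial ℂ) (RatFunc ℂ) f.num *
      algebraMap (Polynomial ℂ) (RatFunc ℂ) (Polynomial.derivative f.denom)) /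
  algebraMap (Polynomial ℂ) (RatFunc ℂ) f.denom ^ 2

/-- Two `n × n` matrices of rational functions are of the same kind if there is
an invertible matrix `T` over the field of rational functions with
`B = T⁻¹ (A T − T')`. -/
def SameKind {n : ℕ} (A B : Matrix (Fin n) (Fin n) (RatFunc ℂ)) : Prop :=
  ∃ T : Matrix (Fin n) (Fin n) (RatFunc ℂ), IsUnit T.det ∧
    B = T⁻¹ * (A * T - T.map ratDeriv)

/-- A matrix of rational functions is reduced of order `k` if
`B_{j,ℓ} = δ_{j+1,ℓ}` for the rows `1, …, k` (here: indices `0, …, k-1`). -/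
def ReducedOfOrder {n : ℕ} (k : ℕ) (A : Matrix (Fin n) (Fin n) (RatFunc ℂ)) : Prop :=
  ∀ j ℓ : Fin n, (j : ℕ) < k → A j ℓ = if (j : ℕ) + 1 = (ℓ : ℕ) then 1 else 0

open Polynomial Bornology

lemma evalRat_eq (f : RatFunc ℂ) (z : ℂ) : evalRat f z = f.num.eval z / f.denom.eval z := by
  simp only [evalRat, RatFunc.eval, Polynomial.eval]

lemma ev_ne_root {q : Polynomial ℂ} (hq : q ≠ 0) : ∀ᶠ z in cobounded ℂ, q.eval z ≠ 0 :=
  Bornology.le_cofinite ℂ ((Polynomial.finite_setOf_isRoot hq).compl_mem_cofinite)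

lemma ev_ne_zero : ∀ᶠ z in cobounded ℂ, z ≠ 0 := Bornology.eventually_ne_cobounded 0

lemma tendsto_inv_pow (m : ℕ) (hm : 1 ≤ m) :
    Tendsto (fun z : ℂ => (z ^ m)⁻¹) (cobounded ℂ) (nhds 0) := by
  rw [tendsto_zero_iff_norm_tendsto_zero]
  simp only [norm_inv, norm_pow]
  have h1 : Tendsto (fun z : ℂ => ‖z‖ ^ m) (cobounded ℂ) atTop :=
    (tendsto_pow_atTop (by omega : m ≠ 0)).comp tendsto_norm_cobounded_atTop
  exact h1.inv_tendsto_atTop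

lemma tendsto_poly_mul_inv_pow (p : Polynomial ℂ) (d : ℕ) (hd : p.natDegree ≤ d) :
    Tendsto (fun z : ℂ => p.eval z * (z ^ d)⁻¹) (cobounded ℂ) (nhds (p.coeff d)) := by
  have hrw : ∀ z : ℂ, p.eval z * (z ^ d)⁻¹
      = ∑ i ∈ Finset.range (d + 1), p.coeff i * (z ^ i * (z ^ d)⁻¹) := by
    intro z
    rw [Polynomial.eval_eq_sum_range' (Nat.lt_succ_of_le hd), Finset.sum_mul]
    simp [mul_assoc]
  simp only [hrw]
  have hsum : p.coeff d = ∑ i ∈ Finset.range (d + 1),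
      (if i = d then p.coeff d else 0) := by
    rw [Finset.sum_ite_eq' (Finset.range (d + 1)) d (fun _ => p.coeff d)]
    simp
  rw [hsum]
  refine tendsto_finset_sum _ (fun i hi => ?_)
  rcases eq_or_ne i d with rfl | hne
  · simp only [if_pos rfl]
    have : Tendsto (fun z : ℂ => p.coeff i * 1) (cobounded ℂ) (nhds (p.coeff i)) := by
      simpa using tendsto_const_nhds
    refine this.congr' ?_ |>.congr (fun z => rfl)
    filter_upwards [ev_ne_zero] with z hz
    rw [mul_inv_cancel₀ (pow_ne_zero _ hz)]
  · have hilt : i < d := lt_of_le_of_ne (Nat.lt_succ_iff.mp (Finset.mem_range.mp hi)) hne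
    simp only [if_neg hne]
    have hlim : Tendsto (fun z : ℂ => p.coeff i * (z ^ (d - i))⁻¹) (cobounded ℂ)
        (nhds (p.coeff i * 0)) := (tendsto_inv_pow (d - i) (by omega)).const_mul _
    rw [mul_zero] at hlim
    refine hlim.congr' ?_
    filter_upwards [ev_ne_zero] with z hz
    have : (z : ℂ) ^ d = z ^ i * z ^ (d - i) := by
      rw [← pow_add]; congr 1; omega
    rw [this, mul_inv, ← mul_assoc (z ^ i), mul_inv_cancel₀ (pow_ne_zero _ hz), one_mul]

lemma tendsto_poly_div (p q : Polynomial ℂ) (hq : q ≠ 0) (h : p.natDegree ≤ q.natDegree) :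
    Tendsto (fun z => p.eval z / q.eval z) (cobounded ℂ)
      (nhds (p.coeff q.natDegree / q.leadingCoeff)) := by
  have hp := tendsto_poly_mul_inv_pow p q.natDegree h
  have hqq := tendsto_poly_mul_inv_pow q q.natDegree le_rfl
  have hlc : q.leadingCoeff ≠ 0 := Polynomial.leadingCoeff_ne_zero.mpr hq
  have hqq' : Tendsto (fun z : ℂ => q.eval z * (z ^ q.natDegree)⁻¹) (cobounded ℂ)
      (nhds q.leadingCoeff) := by simpa [Polynomial.coeff_natDegree] using hqq
  have := hp.div hqq' hlc
  refine this.congr' ?_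
  filter_upwards [ev_ne_zero] with z hz
  simp only [Pi.div_apply]
  rw [mul_div_mul_right _ _ (inv_ne_zero (pow_ne_zero _ hz))]

lemma eval₂_id_eq (q : Polynomial ℂ) (z : ℂ) : q.eval₂ (RingHom.id ℂ) z = q.eval z := rfl

lemma bddAtInf_iff (f : RatFunc ℂ) : BddAtInf f ↔ f.intDegree ≤ 0 := by
  rcases eq_or_ne f 0 with rfl | hf
  · simp [BddAtInf]
  · have hn : f.num ≠ 0 := RatFunc.num_ne_zero hf
    rw [BddAtInf, RatFunc.intDegree, Polynomial.degree_eq_natDegree hn,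
      Polynomial.degree_eq_natDegree f.denom_ne_zero, Nat.cast_le, sub_nonpos, Int.ofNat_le]

lemma bdd_zero : BddAtInf 0 := by simp [BddAtInf]
lemma bdd_one : BddAtInf 1 := (bddAtInf_iff 1).2 (by simp)

lemma bdd_add {f g : RatFunc ℂ} (hf : BddAtInf f) (hg : BddAtInf g) : BddAtInf (f + g) := by
  rcases eq_or_ne g 0 with rfl | hg0
  · simpa using hf
  rcases eq_or_ne (f + g) 0 with h0 | h0
  · rw [h0]; exact bdd_zero
  rw [bddAtInf_iff] at *
  exact le_trans (RatFunc.intDegree_add_le hg0 h0) (max_le hf hg)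

lemma bdd_neg {f : RatFunc ℂ} (hf : BddAtInf f) : BddAtInf (-f) := by
  rw [bddAtInf_iff] at *; rwa [RatFunc.intDegree_neg]

lemma bdd_sub {f g : RatFunc ℂ} (hf : BddAtInf f) (hg : BddAtInf g) : BddAtInf (f - g) := by
  rw [sub_eq_add_neg]; exact bdd_add hf (bdd_neg hg)

lemma bdd_mul {f g : RatFunc ℂ} (hf : BddAtInf f) (hg : BddAtInf g) : BddAtInf (f * g) := by
  rcases eq_or_ne f 0 with rfl | hf0
  · simpa [bdd_zero] using bdd_zero
  rcases eq_or_ne g 0 with rfl | hg0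
  · simpa [bdd_zero] using bdd_zero
  rw [bddAtInf_iff] at *
  rw [RatFunc.intDegree_mul hf0 hg0]
  omega

lemma intDegree_quot (x y : Polynomial ℂ) (hx : x ≠ 0) (hy : y ≠ 0) :
    (algebraMap (Polynomial ℂ) (RatFunc ℂ) x / algebraMap _ _ y).intDegree
      = (x.natDegree : ℤ) - y.natDegree := by
  have hyy : algebraMap (Polynomial ℂ) (RatFunc ℂ) y ≠ 0 := RatFunc.algebraMap_ne_zero hy
  have hq : algebraMap (Polynomial ℂ) (RatFunc ℂ) x / algebraMap _ _ y ≠ 0 :=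
    div_ne_zero (RatFunc.algebraMap_ne_zero hx) hyy
  have hmul : (algebraMap (Polynomial ℂ) (RatFunc ℂ) x / algebraMap _ _ y) * algebraMap _ _ y
      = algebraMap _ _ x := div_mul_cancel₀ _ hyy
  have := RatFunc.intDegree_mul hq hyy
  rw [hmul, RatFunc.intDegree_polynomial, RatFunc.intDegree_polynomial] at this
  omega

lemma evalRat_quot_eventually (x y : Polynomial ℂ) (hy : y ≠ 0) :
    ∀ᶠ z in cobounded ℂ,
      evalRat (algebraMap (Polynomial ℂ) (RatFunc ℂ) x / algebraMap _ _ y) z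
        = x.eval z / y.eval z := by
  set g : RatFunc ℂ := algebraMap (Polynomial ℂ) (RatFunc ℂ) x / algebraMap _ _ y with hg
  have hyy : algebraMap (Polynomial ℂ) (RatFunc ℂ) y ≠ 0 := RatFunc.algebraMap_ne_zero hy
  have hkey : g.num * y = x * g.denom := by
    have h1 : algebraMap (Polynomial ℂ) (RatFunc ℂ) g.num / algebraMap _ _ g.denom
        = algebraMap (Polynomial ℂ) (RatFunc ℂ) x / algebraMap _ _ y := by
      rw [RatFunc.num_div_denom]
    rw [div_eq_div_iff (RatFunc.algebraMap_ne_zero g.denom_ne_zero) hyy, ← map_mul, ← map_mul]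
      at h1
    exact RatFunc.algebraMap_injective ℂ h1
  filter_upwards [ev_ne_root hy, ev_ne_root g.denom_ne_zero] with z hz hdz
  rw [evalRat_eq, div_eq_div_iff hdz hz]
  have := congrArg (Polynomial.eval z) hkey
  simpa [Polynomial.eval_mul] using this

/-- combined predicate: bounded at infinity with limit `c`. -/
def Good (f : RatFunc ℂ) (c : ℂ) : Prop :=
  BddAtInf f ∧ Tendsto (evalRat f) (cobounded ℂ) (nhds c)

lemma good_quot (x y : Polynomial ℂ) (hy : y ≠ 0) (hdeg : x.degree ≤ y.degree) :
    Good (algebraMap (Polynomial ℂ) (RatFunc ℂ) x / algebraMap _ _ y)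
      (x.coeff y.natDegree / y.leadingCoeff) := by
  constructor
  · rcases eq_or_ne x 0 with rfl | hx
    · simpa [map_zero, zero_div] using bdd_zero
    · rw [bddAtInf_iff, intDegree_quot x y hx hy, sub_nonpos, Int.ofNat_le]
      exact Polynomial.natDegree_le_natDegree hdeg
  · exact (tendsto_poly_div x y hy (Polynomial.natDegree_le_natDegree hdeg)).congr'
      (by filter_upwards [evalRat_quot_eventually x y hy] with z h using h.symm)

lemma good_quot_zero (x y : Polynomial ℂ) (hy : y ≠ 0) (hdeg : x.degree < y.degree) :
    Good (algebraMap (Polynomial ℂ) (RatFunc ℂ) x / algebraMap _ _ y) 0 := by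
  have h := good_quot x y hy hdeg.le
  rwa [Polynomial.coeff_eq_zero_of_degree_lt, zero_div] at h
  rwa [← Polynomial.degree_eq_natDegree hy]

lemma good_zero : Good 0 0 :=
  ⟨bdd_zero, by
    have h : evalRat (0 : RatFunc ℂ) = fun _ => (0:ℂ) := funext fun z => by simp [evalRat]
    rw [h]; exact tendsto_const_nhds⟩
lemma good_one : Good 1 1 :=
  ⟨bdd_one, by
    have h : evalRat (1 : RatFunc ℂ) = fun _ => (1:ℂ) := funext fun z => by simp [evalRat]
    rw [h]; exact tendsto_const_nhds⟩
lemma good_const (c : ℂ) : Good (RatFunc.C c) c :=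
  ⟨by rw [bddAtInf_iff]; simp, by
    have h : evalRat (RatFunc.C c) = fun _ => c := funext fun z => by simp [evalRat]
    rw [h]; exact tendsto_const_nhds⟩

lemma good_unique {f : RatFunc ℂ} {c c' : ℂ} (h : Good f c) (h' : Good f c') : c = c' :=
  tendsto_nhds_unique h.2 h'.2

lemma good_add {f g : RatFunc ℂ} {a b : ℂ} (hf : Good f a) (hg : Good g b) :
    Good (f + g) (a + b) := by
  refine ⟨bdd_add hf.1 hg.1, (hf.2.add hg.2).congr' ?_⟩
  filter_upwards [ev_ne_root f.denom_ne_zero, ev_ne_root g.denom_ne_zero] with z h1 h2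
  simp only [evalRat]
  exact (RatFunc.eval_add (f := RingHom.id ℂ) (a := z) h1 h2).symm

lemma good_mul {f g : RatFunc ℂ} {a b : ℂ} (hf : Good f a) (hg : Good g b) :
    Good (f * g) (a * b) := by
  refine ⟨bdd_mul hf.1 hg.1, (hf.2.mul hg.2).congr' ?_⟩
  filter_upwards [ev_ne_root f.denom_ne_zero, ev_ne_root g.denom_ne_zero] with z h1 h2
  simp only [evalRat]
  exact (RatFunc.eval_mul (f := RingHom.id ℂ) (a := z) h1 h2).symm

lemma good_neg {f : RatFunc ℂ} {a : ℂ} (hf : Good f a) : Good (-f) (-a) := by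
  have := good_mul (good_const (-1)) hf
  have h2 : RatFunc.C (-1 : ℂ) * f = -f := by rw [map_neg, map_one, neg_one_mul]
  have h3 : (-1 : ℂ) * a = -a := neg_one_mul a
  rwa [h2, h3] at this

lemma good_sub {f g : RatFunc ℂ} {a b : ℂ} (hf : Good f a) (hg : Good g b) :
    Good (f - g) (a - b) := by
  have := good_add hf (good_neg hg)
  rwa [← sub_eq_add_neg, ← sub_eq_add_neg] at this

lemma good_tendsto_self {f : RatFunc ℂ} (hb : BddAtInf f) :
    Tendsto (evalRat f) (cobounded ℂ)
      (nhds (f.num.coeff f.denom.natDegree / f.denom.leadingCoeff)) := by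
  have h : evalRat f = fun z => f.num.eval z / f.denom.eval z := funext (evalRat_eq f)
  rw [h]
  exact tendsto_poly_div _ _ f.denom_ne_zero (Polynomial.natDegree_le_natDegree hb)

lemma good_intDegree_zero {f : RatFunc ℂ} {c : ℂ} (hf : Good f c) (hc : c ≠ 0) :
    f.intDegree = 0 := by
  have hle : f.intDegree ≤ 0 := (bddAtInf_iff f).1 hf.1
  rcases lt_or_eq_of_le hle with hlt | he
  · exfalso
    have hnd : f.num.natDegree < f.denom.natDegree := by
      rw [RatFunc.intDegree] at hlt; omega
    have h0 : f.num.coeff f.denom.natDegree = 0 :=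
      Polynomial.coeff_eq_zero_of_natDegree_lt hnd
    have := good_tendsto_self hf.1
    rw [h0, zero_div] at this
    exact hc (tendsto_nhds_unique hf.2 this)
  · exact he

lemma good_ne_zero {f : RatFunc ℂ} {c : ℂ} (hf : Good f c) (hc : c ≠ 0) : f ≠ 0 := by
  rintro rfl
  exact hc (good_unique good_zero hf).symm

lemma good_inv {f : RatFunc ℂ} {c : ℂ} (hf : Good f c) (hc : c ≠ 0) : Good f⁻¹ c⁻¹ := by
  have hf0 : f ≠ 0 := good_ne_zero hf hc
  constructor
  · rw [bddAtInf_iff]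
    have h1 : f⁻¹ * f = 1 := inv_mul_cancel₀ hf0
    have h2 := RatFunc.intDegree_mul (inv_ne_zero hf0) hf0
    rw [h1, RatFunc.intDegree_one, good_intDegree_zero hf hc] at h2
    omega
  · refine (hf.2.inv₀ hc).congr' ?_
    filter_upwards [ev_ne_root f.denom_ne_zero, ev_ne_root (f⁻¹).denom_ne_zero,
      hf.2.eventually_ne hc] with z h1 h2 h3
    have hmul : evalRat f z * evalRat f⁻¹ z = 1 := by
      have := RatFunc.eval_mul (f := RingHom.id ℂ) (a := z) (x := f) (y := f⁻¹) h1 h2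
      rw [mul_inv_cancel₀ hf0] at this
      simpa [evalRat] using this.symm
    exact inv_eq_of_mul_eq_one_right hmul

lemma good_ratDeriv {f : RatFunc ℂ} (hb : BddAtInf f) : Good (ratDeriv f) 0 := by
  set p := f.num with hp
  set q := f.denom with hq
  set x := Polynomial.derivative p * q - p * Polynomial.derivative q with hx
  have hq0 : q ≠ 0 := f.denom_ne_zero
  have h1 : ratDeriv f = algebraMap (Polynomial ℂ) (RatFunc ℂ) x / algebraMap _ _ (q ^ 2) := by
    rw [ratDeriv, ← map_mul, ← map_mul, ← map_sub, ← map_pow]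
  rcases eq_or_ne x 0 with hx0 | hx0
  · rw [h1, hx0, map_zero, zero_div]; exact good_zero
  · have hp0 : p ≠ 0 := by
      rintro hp0
      apply hx0
      rw [hx, hp0]
      simp
    have hdq : (q : Polynomial ℂ).degree ≠ ⊥ := by
      rw [Ne, Polynomial.degree_eq_bot]; exact hq0
    have hdp : (p : Polynomial ℂ).degree ≠ ⊥ := by
      rw [Ne, Polynomial.degree_eq_bot]; exact hp0
    have hdeg : x.degree < (q ^ 2).degree := by
      have h2 : (q ^ 2).degree = q.degree + q.degree := by
        rw [pow_two, Polynomial.degree_mul]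
      have b1 : (Polynomial.derivative p * q).degree < q.degree + q.degree := by
        rw [Polynomial.degree_mul]
        calc (Polynomial.derivative p).degree + q.degree
            < p.degree + q.degree :=
              WithBot.add_lt_add_right hdq (Polynomial.degree_derivative_lt hp0)
          _ ≤ q.degree + q.degree := add_le_add_left hb _
      have b2 : (p * Polynomial.derivative q).degree < q.degree + q.degree := by
        rw [Polynomial.degree_mul]
        calc p.degree + (Polynomial.derivative q).degree
            ≤ q.degree + (Polynomial.derivative q).degree := add_le_add_left hb _
          _ < q.degree + q.degree :=
              WithBot.add_lt_add_left hdq (Polynomial.degree_derivative_lt hq0)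
      rw [h2]
      exact lt_of_le_of_lt (Polynomial.degree_sub_le _ _) (max_lt b1 b2)
    rw [h1]
    exact good_quot_zero x (q ^ 2) (pow_ne_zero 2 hq0) hdeg

lemma ratDeriv_zero : ratDeriv (0 : RatFunc ℂ) = 0 := by
  simp [ratDeriv]

lemma ratDeriv_one : ratDeriv (1 : RatFunc ℂ) = 0 := by
  simp [ratDeriv]

lemma good_sum {ι : Type*} (s : Finset ι) (f : ι → RatFunc ℂ) (c : ι → ℂ)
    (h : ∀ i ∈ s, Good (f i) (c i)) : Good (∑ i ∈ s, f i) (∑ i ∈ s, c i) := by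
  classical
  induction s using Finset.induction_on with
  | empty => simpa using good_zero
  | insert _ _ hx ih =>
    rw [Finset.sum_insert hx, Finset.sum_insert hx]
    exact good_add (h _ (Finset.mem_insert_self _ _))
      (ih fun i hi => h i (Finset.mem_insert_of_mem hi))

section RowMat

variable {n : ℕ}

/-- identity matrix with row `κ` replaced by `w`. -/
def rowMat {F : Type*} [Field F] (κ : Fin n) (w : Fin n → F) : Matrix (Fin n) (Fin n) F :=
  fun i j => if i = κ then w j else if i = j then 1 else 0

/-- the corresponding row for the inverse matrix. -/
def rowInv {F : Type*} [Field F] (κ : Fin n) (w : Fin n → F) : Fin n → F :=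
  fun j => if j = κ then (w κ)⁻¹ else -w j * (w κ)⁻¹

lemma sum_mul_rowMat {F : Type*} [Field F] (κ : Fin n) (u : Fin n → F) (v : Fin n → F)
    (j : Fin n) :
    ∑ m, v m * rowMat κ u m j = v κ * u j + (if j = κ then 0 else v j) := by
  classical
  have hsplit : ∀ m : Fin n, v m * rowMat κ u m j
      = (if m = κ then v κ * u j else 0) + (if m = j then (if m = κ then 0 else v m) else 0) := by
    intro m
    rcases eq_or_ne m κ with rfl | hm
    · rcases eq_or_ne m j with rfl | hj
      · simp [rowMat]
      · simp [rowMat, hj]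
    · rcases eq_or_ne m j with rfl | hj
      · simp [rowMat, hm]
      · simp [rowMat, hm, hj]
  rw [Finset.sum_congr rfl fun m _ => hsplit m, Finset.sum_add_distrib,
    Finset.sum_ite_eq' Finset.univ κ (fun _ => v κ * u j),
    Finset.sum_ite_eq' Finset.univ j (fun m => if m = κ then 0 else v m)]
  simp [eq_comm]

lemma mul_rowMat_apply {F : Type*} [Field F] (M : Matrix (Fin n) (Fin n) F) (κ : Fin n)
    (u : Fin n → F) (i j : Fin n) :
    (M * rowMat κ u) i j = M i κ * u j + (if j = κ then 0 else M i j) := by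
  rw [Matrix.mul_apply, sum_mul_rowMat]

lemma rowMat_mul_apply {F : Type*} [Field F] (κ : Fin n) (w : Fin n → F)
    (M : Matrix (Fin n) (Fin n) F) (i j : Fin n) :
    (rowMat κ w * M) i j = if i = κ then ∑ m, w m * M m j else M i j := by
  classical
  rw [Matrix.mul_apply]
  rcases eq_or_ne i κ with rfl | hi
  · simp [rowMat]
  · simp only [rowMat, if_neg hi, ite_mul, one_mul, zero_mul, Finset.sum_ite_eq]
    simp

lemma rowMat_mul_rowInv {F : Type*} [Field F] (κ : Fin n) (w : Fin n → F) (hw : w κ ≠ 0) :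
    rowMat κ w * rowMat κ (rowInv κ w) = 1 := by
  classical
  ext i j
  rw [rowMat_mul_apply]
  by_cases hi : i = κ
  · rw [if_pos hi, sum_mul_rowMat, hi]
    by_cases hj : j = κ
    · subst hj
      simp [rowInv, mul_inv_cancel₀ hw, Matrix.one_apply]
    · have h1 : rowInv κ w j = -w j * (w κ)⁻¹ := if_neg hj
      rw [h1, if_neg hj, Matrix.one_apply_ne (fun h : κ = j => hj h.symm)]
      field_simp
      ring
  · rw [if_neg hi]
    simp [rowMat, hi, Matrix.one_apply]

end RowMat

/-- entrywise Good for matrices -/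
def GoodM {n : ℕ} (X : Matrix (Fin n) (Fin n) (RatFunc ℂ)) (Y : Matrix (Fin n) (Fin n) ℂ) :
    Prop := ∀ i j, Good (X i j) (Y i j)

lemma goodM_mul {n : ℕ} {X Z : Matrix (Fin n) (Fin n) (RatFunc ℂ)}
    {Y W : Matrix (Fin n) (Fin n) ℂ} (hX : GoodM X Y) (hZ : GoodM Z W) :
    GoodM (X * Z) (Y * W) := by
  intro i j
  rw [Matrix.mul_apply, Matrix.mul_apply]
  exact good_sum _ _ _ fun m _ => good_mul (hX i m) (hZ m j)

lemma goodM_sub {n : ℕ} {X Z : Matrix (Fin n) (Fin n) (RatFunc ℂ)}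
    {Y W : Matrix (Fin n) (Fin n) ℂ} (hX : GoodM X Y) (hZ : GoodM Z W) :
    GoodM (X - Z) (Y - W) := by
  intro i j
  rw [Matrix.sub_apply, Matrix.sub_apply]
  exact good_sub (hX i j) (hZ i j)

lemma goodM_rowMat {n : ℕ} (κ : Fin n) {aa : Fin n → RatFunc ℂ} {ww : Fin n → ℂ}
    (h : ∀ j, Good (aa j) (ww j)) : GoodM (rowMat κ aa) (rowMat κ ww) := by
  intro i j
  unfold rowMat
  by_cases hi : i = κ
  · rw [if_pos hi, if_pos hi]; exact h j
  · rw [if_neg hi, if_neg hi]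
    by_cases hij : i = j
    · rw [if_pos hij, if_pos hij]; exact good_one
    · rw [if_neg hij, if_neg hij]; exact good_zero

/-- Lemma 2.4: if `A` is reduced of order `k-1`, bounded at infinity, and
`A_{k,k+1}(∞) ≠ 0` (rows and columns numbered `1, …, n`), then there is a
matrix `B` of the same kind as `A`, bounded at infinity, reduced of order `k`,
and a constant invertible matrix `S` with `B(∞) = S⁻¹ A(∞) S`; in particular
`A(∞)` and `B(∞)` are similar. -/
theorem lemma_same_kind_reduction (n k : ℕ) (hk1 : 1 ≤ k) (hkn : k ≤ n - 1)
    (A : Matrix (Fin n) (Fin n) (RatFunc ℂ))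
    (hbdd : ∀ i j, BddAtInf (A i j))
    (Ainf : Matrix (Fin n) (Fin n) ℂ)
    (hAinf : ∀ i j, Tendsto (evalRat (A i j)) (Bornology.cobounded ℂ) (nhds (Ainf i j)))
    (hred : ReducedOfOrder (k - 1) A)
    (hnz : Ainf ⟨k - 1, by omega⟩ ⟨k, by omega⟩ ≠ 0) :
    ∃ (B : Matrix (Fin n) (Fin n) (RatFunc ℂ)) (Binf : Matrix (Fin n) (Fin n) ℂ),
      (∀ i j, BddAtInf (B i j)) ∧
      (∀ i j, Tendsto (evalRat (B i j)) (Bornology.cobounded ℂ) (nhds (Binf i j))) ∧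
      SameKind A B ∧
      ReducedOfOrder k B ∧
      ∃ S : Matrix (Fin n) (Fin n) ℂ, IsUnit S.det ∧ Binf = S⁻¹ * Ainf * S := by
  classical
  have hn2 : 2 ≤ n := by omega
  set κ' : Fin n := ⟨k - 1, by omega⟩ with hκ'
  set κ : Fin n := ⟨k, by omega⟩ with hκ
  set a : Fin n → RatFunc ℂ := A κ' with ha
  set w : Fin n → ℂ := Ainf κ' with hw
  have hGa : ∀ j, Good (a j) (w j) := fun j => ⟨hbdd κ' j, hAinf κ' j⟩
  have hwκ : w κ ≠ 0 := hnz
  have haκ : a κ ≠ 0 := good_ne_zero (hGa κ) hwκ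
  set u : Fin n → RatFunc ℂ := rowInv κ a with hu
  set v : Fin n → ℂ := rowInv κ w with hv
  have hGu : ∀ j, Good (u j) (v j) := by
    intro j
    unfold u v
    unfold rowInv
    by_cases hj : j = κ
    · rw [if_pos hj, if_pos hj]; exact good_inv (hGa κ) hwκ
    · rw [if_neg hj, if_neg hj]
      exact good_mul (good_neg (hGa j)) (good_inv (hGa κ) hwκ)
  set T : Matrix (Fin n) (Fin n) (RatFunc ℂ) := rowMat κ u with hT
  have hST : rowMat κ a * T = 1 := rowMat_mul_rowInv κ a haκ
  have hdetT : IsUnit T.det := Matrix.isUnit_det_of_left_inverse hST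
  have hTinv : T⁻¹ = rowMat κ a := Matrix.inv_eq_left_inv hST
  set B : Matrix (Fin n) (Fin n) (RatFunc ℂ) := T⁻¹ * (A * T - T.map ratDeriv) with hB
  have hBeq : B = rowMat κ a * (A * T - T.map ratDeriv) := by rw [hB, hTinv]
  set Binf : Matrix (Fin n) (Fin n) ℂ :=
    rowMat κ w * (Ainf * rowMat κ v - 0) with hBinf
  -- Goodness
  have hGD : GoodM (T.map ratDeriv) 0 := by
    intro i j
    rw [Matrix.map_apply]
    have : BddAtInf (T i j) := ((goodM_rowMat κ hGu) i j).1
    have h0 : (0 : Matrix (Fin n) (Fin n) ℂ) i j = 0 := rfl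
    rw [h0]
    exact good_ratDeriv this
  have hGB : GoodM B Binf := by
    rw [hBeq, hBinf]
    exact goodM_mul (goodM_rowMat κ hGa)
      (goodM_sub (goodM_mul (fun i j => ⟨hbdd i j, hAinf i j⟩) (goodM_rowMat κ hGu)) hGD)
  refine ⟨B, Binf, fun i j => (hGB i j).1, fun i j => (hGB i j).2, ⟨T, hdetT, hB⟩, ?_, ?_⟩
  · -- ReducedOfOrder k B
    intro j ℓ hj
    have hjκ : j ≠ κ := fun h => by
      rw [h] at hj; simp only [hκ] at hj; omega
    have hTd : (T.map ratDeriv) j ℓ = 0 := by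
      rw [Matrix.map_apply, hT]
      unfold rowMat
      rw [if_neg hjκ]
      by_cases hjl : j = ℓ
      · rw [if_pos hjl, ratDeriv_one]
      · rw [if_neg hjl, ratDeriv_zero]
    have hBjl : B j ℓ = A j κ * u ℓ + (if ℓ = κ then 0 else A j ℓ) := by
      rw [hBeq, rowMat_mul_apply, if_neg hjκ, Matrix.sub_apply, hTd, sub_zero,
        mul_rowMat_apply]
    rw [hBjl]
    rcases lt_or_ge (j : ℕ) (k - 1) with hlt | hge
    · have h1 : A j κ = 0 := by
        rw [hred j κ hlt]
        exact if_neg (by simp only [hκ]; omega)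
      have h2 : A j ℓ = if (j : ℕ) + 1 = (ℓ : ℕ) then 1 else 0 := hred j ℓ hlt
      rw [h1, zero_mul, zero_add]
      by_cases hℓ : ℓ = κ
      · rw [if_pos hℓ, if_neg]
        rw [hℓ]; simp only [hκ]; omega
      · rw [if_neg hℓ, h2]
    · have hjval : (j : ℕ) = k - 1 := by omega
      have hjκ' : j = κ' := Fin.ext (by simp only [hκ']; exact hjval)
      rw [hjκ']
      have hrow : ∀ m, A κ' m = a m := fun m => rfl
      by_cases hℓ : ℓ = κ
      · rw [if_pos hℓ, hℓ, hrow, hu]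
        have huκ : rowInv κ a κ = (a κ)⁻¹ := if_pos rfl
        rw [huκ, mul_inv_cancel₀ haκ, add_zero, if_pos]
        simp only [hκ, hκ'] at *
        omega
      · rw [if_neg hℓ, hrow, hrow, hu]
        have huℓ : rowInv κ a ℓ = -a ℓ * (a κ)⁻¹ := if_neg hℓ
        rw [huℓ, if_neg]
        · have : a κ * (-a ℓ * (a κ)⁻¹) = -a ℓ := by
            field_simp
          rw [this, neg_add_cancel]
        · have hlv : (ℓ : ℕ) ≠ k := fun h => hℓ (Fin.ext (by simp only [hκ]; exact h))
          simp only [hκ'] at *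
          omega
  · -- similarity
    refine ⟨rowMat κ v, ?_, ?_⟩
    · have h1 : rowMat κ w * rowMat κ v = 1 := rowMat_mul_rowInv κ w hwκ
      exact Matrix.isUnit_det_of_left_inverse h1
    · have h1 : rowMat κ w * rowMat κ v = 1 := rowMat_mul_rowInv κ w hwκ
      have h2 : (rowMat κ v)⁻¹ = rowMat κ w := Matrix.inv_eq_left_inv h1
      rw [h2, hBinf, sub_zero, Matrix.mul_assoc]
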